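/- Let v_0, ..., v_d ∈ R^d be vertices of a simplex whose interior contains the origin. Any colorful transversal S = {α_0 v_0 or negative multiples, ...} from the configuration C_i = {v_i, -v_i, ..., -(n_i-1)v_i} contains 0 in its convex hull if and only if S = {v_0,...,v_d} or S = {-α_0 v_0, ..., -α_d v_d} for integers 1 ≤ α_i < n_i. -/

import Mathlib

/-- Characterization of hitting transversals in the extremal example: a transversal
of `C i = {v i, -v i, …, -(n i - 1) v i}` contains the origin in its convex hull if
and only if it is `{v 0, …, v d}` or consists solely of negative multiples. -/
theorem extremal_example_hitting_iff (d : ℕ) (v : Fin (d + 1) → EuclideanSpace ℝ (Fin d))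
    (hv : AffineIndependent ℝ v)
    (h0 : (0 : EuclideanSpace ℝ (Fin d)) ∈ interior (convexHull ℝ (Set.range v)))
    (n : Fin (d + 1) → ℕ) (hn : ∀ i, 2 ≤ n i)
    (pts : (i : Fin (d + 1)) → Fin (n i) → EuclideanSpace ℝ (Fin d))
    (hpts : ∀ i (j : Fin (n i)),
      pts i j = if (j : ℕ) = 0 then v i else (-(j : ℕ) : ℝ) • v i)
    (α : (i : Fin (d + 1)) → Fin (n i)) :
    (0 : EuclideanSpace ℝ (Fin d)) ∈ convexHull ℝ (Set.range fun i => pts i (α i)) ↔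
      ((∀ i, (α i : ℕ) = 0) ∨ (∀ i, (α i : ℕ) ≠ 0)) := by
  classical
  have htop : affineSpan ℝ (Set.range v) = ⊤ :=
    affineSpan_eq_top_of_nonempty_interior ⟨0, h0⟩
  let b : AffineBasis (Fin (d + 1)) ℝ (EuclideanSpace ℝ (Fin d)) := ⟨v, hv, htop⟩
  have hbv : ⇑b = v := rfl
  have hcpos : ∀ i, 0 < b.coord i 0 := by
    have h := b.interior_convexHull
    rw [hbv] at h
    rw [h] at h0
    exact h0
  have hc1 : ∑ i, b.coord i 0 = 1 := b.sum_coord_apply_eq_one 0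
  have hcv : ∑ i, b.coord i 0 • v i = 0 := by
    have h := b.linear_combination_coord_eq_self 0
    rw [hbv] at h
    exact h
  set g : Fin (d + 1) → EuclideanSpace ℝ (Fin d) := fun i => pts i (α i) with hgdef
  set τ : Fin (d + 1) → ℝ := fun i => if (α i : ℕ) = 0 then 1 else -((α i : ℕ) : ℝ) with hτ
  have hgτ : ∀ i, g i = τ i • v i := by
    intro i
    simp only [hgdef, hτ, hpts i (α i)]
    split
    · rw [one_smul]
    · rfl
  have hτne : ∀ i, τ i ≠ 0 := by
    intro i
    simp only [hτ]
    split
    · exact one_ne_zero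
    · next h =>
      simp only [ne_eq, neg_eq_zero, Nat.cast_eq_zero]
      exact h
  constructor
  · intro hmem
    rw [convexHull_eq] at hmem
    obtain ⟨ι, t, w, z, hw0, hw1, hz, hcm⟩ := hmem
    have hk : ∀ i, ∃ j : Fin (d + 1), i ∈ t → g j = z i := by
      intro i
      by_cases hi : i ∈ t
      · obtain ⟨j, hj⟩ := hz i hi
        exact ⟨j, fun _ => hj⟩
      · exact ⟨0, fun h => absurd h hi⟩
    choose k hkk using hk
    set W : Fin (d + 1) → ℝ := fun j => ∑ i ∈ t.filter (fun i => k i = j), w i with hW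
    have hW0 : ∀ j, 0 ≤ W j := fun j =>
      Finset.sum_nonneg fun i hi => hw0 i (Finset.mem_filter.1 hi).1
    have hW1 : ∑ j, W j = 1 := by
      simp only [hW]
      rw [Finset.sum_fiberwise t k w]
      exact hw1
    have hWg : ∑ j, W j • g j = 0 := by
      have h1 : ∀ j, W j • g j = ∑ i ∈ t.filter (fun i => k i = j), w i • z i := by
        intro j
        simp only [hW]
        rw [Finset.sum_smul]
        refine Finset.sum_congr rfl fun i hi => ?_
        obtain ⟨hit, hkij⟩ := Finset.mem_filter.1 hi
        rw [← hkk i hit, hkij]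
      calc ∑ j, W j • g j = ∑ j, ∑ i ∈ t.filter (fun i => k i = j), w i • z i :=
            Finset.sum_congr rfl fun j _ => h1 j
        _ = ∑ i ∈ t, w i • z i := Finset.sum_fiberwise t k _
        _ = 0 := by rw [← Finset.centerMass_eq_of_sum_1 t z hw1, hcm]
    set S : ℝ := ∑ j, W j * τ j with hS
    have key : ∀ j, W j * τ j = S * b.coord j 0 := by
      have h := affineIndependent_iff.1 hv Finset.univ
        (fun j => W j * τ j - S * b.coord j 0) ?_ ?_
      · intro j
        have := h j (Finset.mem_univ j)
        linarith
      · rw [Finset.sum_sub_distrib, ← Finset.mul_sum, hc1, mul_one, ← hS, sub_self]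
      · have e1 : ∑ j, (W j * τ j) • v j = 0 := by
          calc ∑ j, (W j * τ j) • v j = ∑ j, W j • g j := by
                refine Finset.sum_congr rfl fun j _ => ?_
                rw [hgτ j, smul_smul]
            _ = 0 := hWg
        have e2 : ∑ j, (S * b.coord j 0) • v j = 0 := by
          calc ∑ j, (S * b.coord j 0) • v j = S • ∑ j, b.coord j 0 • v j := by
                rw [Finset.smul_sum]
                exact Finset.sum_congr rfl fun j _ => (smul_smul S _ _).symm
            _ = 0 := by rw [hcv, smul_zero]
        simp only [sub_smul, Finset.sum_sub_distrib, e1, e2, sub_self]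
    have hSne : S ≠ 0 := by
      intro h
      have hz0 : ∀ j, W j = 0 := by
        intro j
        have hj := key j
        rw [h, zero_mul] at hj
        exact (mul_eq_zero.1 hj).resolve_right (hτne j)
      simp only [hz0, Finset.sum_const_zero] at hW1
      exact zero_ne_one hW1
    rcases hSne.lt_or_gt with hS0 | hS0
    · right
      intro j hj
      have hτj : τ j = 1 := by simp [hτ, hj]
      have hkey := key j
      rw [hτj, mul_one] at hkey
      have : S * b.coord j 0 < 0 := mul_neg_of_neg_of_pos hS0 (hcpos j)
      linarith [hW0 j]
    · left
      intro j
      by_contra hj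
      have hτj : τ j = -((α j : ℕ) : ℝ) := if_neg hj
      have hτneg : τ j < 0 := by
        rw [hτj]
        have : (0 : ℝ) < ((α j : ℕ) : ℝ) := by exact_mod_cast Nat.pos_of_ne_zero hj
        linarith
      have hkey := key j
      have hpos : 0 < S * b.coord j 0 := mul_pos hS0 (hcpos j)
      nlinarith [hW0 j]
  · rintro (h | h)
    · have hgv : g = v := by
        funext i
        simp only [hgdef, hpts i (α i), h i, if_pos]
      rw [hgv]
      exact interior_subset h0
    · set w : Fin (d + 1) → ℝ := fun i => b.coord i 0 / ((α i : ℕ) : ℝ) with hw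
      have hαpos : ∀ i, (0 : ℝ) < ((α i : ℕ) : ℝ) := fun i => by
        exact_mod_cast Nat.pos_of_ne_zero (h i)
      have hwpos : ∀ i, 0 < w i := fun i => div_pos (hcpos i) (hαpos i)
      have hsum : 0 < ∑ i, w i :=
        Finset.sum_pos (fun i _ => hwpos i) Finset.univ_nonempty
      have hmem := Finset.centerMass_mem_convexHull Finset.univ
        (fun i _ => (hwpos i).le) hsum (fun i _ => (Set.mem_range_self i : g i ∈ Set.range g))
      have hcm : Finset.univ.centerMass w g = 0 := by
        rw [Finset.centerMass]
        have hterm : ∀ i, w i • g i = (-(b.coord i 0)) • v i := by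
          intro i
          rw [hgτ i, smul_smul]
          congr 1
          have hτj : τ i = -((α i : ℕ) : ℝ) := if_neg (h i)
          rw [hτj, hw]
          field_simp
          rw [mul_div_assoc, div_self (hαpos i).ne', mul_one]
        have hz : ∑ i, w i • g i = 0 := by
          simp only [hterm, neg_smul, Finset.sum_neg_distrib, hcv, neg_zero]
        rw [hz, smul_zero]
      rwa [hcm] at hmem
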